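/- There exists a universal constant C > 0 with the following property: if a < b are real numbers, f : [a,b] → ℝ is twice continuously differentiable with |f''(ξ)| > 1 for every ξ ∈ [a,b], and ψ : [a,b] → ℂ is continuously differentiable, then for every real λ ≠ 0, | ∫_a^b e^{iλ f(ξ)} ψ(ξ) dξ | ≤ C |λ|^{-1/2} ( |ψ(b)| + ∫_a^b |ψ'(ξ)| dξ ), where C does not depend on a, b, f, ψ, or λ. -/

import Mathlib

open MeasureTheory Complex Filter intervalIntegral
open scoped Real

noncomputable section

namespace VdC

lemma norm_exp_phase (lam t : ℝ) : ‖Complex.exp (Complex.I * lam * t)‖ = 1 := by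
  have h : (Complex.I * lam * t) = ((lam * t : ℝ) : ℂ) * Complex.I := by push_cast; ring
  rw [h, Complex.norm_exp_ofReal_mul_I]

lemma hasDerivAt_phase (lam : ℝ) {f : ℝ → ℝ} {d x : ℝ} (hf : HasDerivAt f d x) :
    HasDerivAt (fun ξ => Complex.exp (Complex.I * lam * f ξ))
      (Complex.I * lam * d * Complex.exp (Complex.I * lam * f x)) x := by
  have h1 : HasDerivAt (fun ξ => Complex.I * lam * (f ξ : ℂ)) (Complex.I * lam * d) x :=
    (hf.ofReal_comp).const_mul (Complex.I * lam)
  simpa [mul_comm] using h1.cexp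

lemma lemA {a b lam δ : ℝ} (hab : a ≤ b) (hlam : 0 < lam) (hδ : 0 < δ)
    {f f' f'' : ℝ → ℝ}
    (hf : ∀ x ∈ Set.Icc a b, HasDerivAt f (f' x) x)
    (hf' : ∀ x ∈ Set.Icc a b, HasDerivAt f' (f'' x) x)
    (hf''c : ContinuousOn f'' (Set.Icc a b))
    (hf''nn : ∀ x ∈ Set.Icc a b, 0 ≤ f'' x)
    (hδf : ∀ x ∈ Set.Icc a b, δ ≤ |f' x|) :
    ‖∫ ξ in a..b, Complex.exp (Complex.I * lam * f ξ)‖ ≤ 4 / (lam * δ) := by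
  have huIcc : Set.uIcc a b = Set.Icc a b := Set.uIcc_of_le hab
  have hf'ne : ∀ x ∈ Set.Icc a b, f' x ≠ 0 := by
    intro x hx h
    have := hδf x hx
    rw [h, abs_zero] at this
    linarith
  have hIline : (Complex.I : ℂ) * lam ≠ 0 := by
    simp [Complex.I_ne_zero, Complex.ofReal_ne_zero, ne_of_gt hlam]
  have hden : ∀ x ∈ Set.Icc a b, (Complex.I * lam * (f' x : ℂ)) ≠ 0 := by
    intro x hx
    exact mul_ne_zero hIline (by exact_mod_cast hf'ne x hx)
  have hf'cont : ContinuousOn f' (Set.Icc a b) :=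
    fun x hx => ((hf' x hx).continuousAt).continuousWithinAt
  have hfcont : ContinuousOn f (Set.Icc a b) :=
    fun x hx => ((hf x hx).continuousAt).continuousWithinAt
  set G : ℝ → ℂ := fun ξ => Complex.exp (Complex.I * lam * f ξ) / (Complex.I * lam * f' ξ)
    with hGdef
  set E : ℝ → ℂ := fun ξ =>
    Complex.exp (Complex.I * lam * f ξ) * (f'' ξ) / (Complex.I * lam * (f' ξ : ℂ)^2)
    with hEdef
  have hG : ∀ x ∈ Set.uIcc a b,
      HasDerivAt G (Complex.exp (Complex.I * lam * f x) - E x) x := by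
    intro x hx
    rw [huIcc] at hx
    have hnum := hasDerivAt_phase lam (hf x hx)
    have hdenD : HasDerivAt (fun ξ => Complex.I * lam * (f' ξ : ℂ))
        (Complex.I * lam * (f'' x)) x := ((hf' x hx).ofReal_comp).const_mul (Complex.I * lam)
    have h := hnum.div hdenD (hden x hx)
    refine h.congr_deriv ?_
    have hfx : (f' x : ℂ) ≠ 0 := by exact_mod_cast hf'ne x hx
    simp only [hEdef]
    have hlc : (lam : ℂ) ≠ 0 := Complex.ofReal_ne_zero.mpr (ne_of_gt hlam)
    field_simp
  have hexpCont : ContinuousOn (fun ξ => Complex.exp (Complex.I * lam * f ξ)) (Set.Icc a b) :=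
    Complex.continuous_exp.comp_continuousOn
      ((continuous_const.continuousOn).mul (Complex.continuous_ofReal.comp_continuousOn hfcont))
  have hECont : ContinuousOn E (Set.Icc a b) := by
    apply ContinuousOn.div
    · exact hexpCont.mul (Complex.continuous_ofReal.comp_continuousOn hf''c)
    · exact (continuous_const.continuousOn).mul
        (((Complex.continuous_ofReal.comp_continuousOn hf'cont)).pow 2)
    · intro x hx
      have hfx : (f' x : ℂ) ≠ 0 := by exact_mod_cast hf'ne x hx
      exact mul_ne_zero hIline (pow_ne_zero 2 hfx)
  have hEint : IntervalIntegrable E volume a b :=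
    ContinuousOn.intervalIntegrable (by rw [huIcc]; exact hECont)
  have hexpint : IntervalIntegrable (fun ξ => Complex.exp (Complex.I * lam * f ξ)) volume a b :=
    ContinuousOn.intervalIntegrable (by rw [huIcc]; exact hexpCont)
  have key : ∫ ξ in a..b, Complex.exp (Complex.I * lam * f ξ)
      = (G b - G a) + ∫ ξ in a..b, E ξ := by
    have h1 : ∫ ξ in a..b, (Complex.exp (Complex.I * lam * f ξ) - E ξ) = G b - G a :=
      intervalIntegral.integral_eq_sub_of_hasDerivAt hG (hexpint.sub hEint)
    rw [intervalIntegral.integral_sub hexpint hEint] at h1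
    linear_combination h1
  -- bounds
  have hGb : ∀ x ∈ Set.Icc a b, ‖G x‖ ≤ 1 / (lam * δ) := by
    intro x hx
    have : ‖G x‖ = 1 / (lam * |f' x|) := by
      rw [hGdef]
      simp only [norm_div, norm_exp_phase]
      congr 1
      rw [norm_mul, norm_mul]
      simp [abs_of_pos hlam, Real.norm_eq_abs]
    rw [this]
    apply one_div_le_one_div_of_le (by positivity)
    exact mul_le_mul_of_nonneg_left (hδf x hx) (le_of_lt hlam)
  -- the E-integral
  have hnormE : ∀ x ∈ Set.Icc a b, ‖E x‖ = (f'' x / (f' x)^2) / lam := by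
    intro x hx
    rw [hEdef]
    simp only [norm_div, norm_mul, norm_exp_phase, one_mul, norm_pow,
      Complex.norm_I, Complex.norm_real, Real.norm_eq_abs, sq_abs]
    rw [abs_of_pos hlam, _root_.abs_of_nonneg (hf''nn x hx)]
    ring
  have hamem : a ∈ Set.Icc a b := Set.left_mem_Icc.mpr hab
  have hbmem : b ∈ Set.Icc a b := Set.right_mem_Icc.mpr hab
  have hH : ∫ ξ in a..b, f'' ξ / (f' ξ)^2 = (f' a)⁻¹ - (f' b)⁻¹ := by
    have hD : ∀ x ∈ Set.uIcc a b, HasDerivAt (fun ξ => -(f' ξ)⁻¹) (f'' x / (f' x)^2) x := by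
      intro x hx
      rw [huIcc] at hx
      have h2 := ((hf' x hx).inv (hf'ne x hx)).neg
      refine h2.congr_deriv ?_
      ring
    have hint : IntervalIntegrable (fun ξ => f'' ξ / (f' ξ)^2) volume a b :=
      ContinuousOn.intervalIntegrable (by
        rw [huIcc]
        exact hf''c.div (hf'cont.pow 2) (fun x hx => pow_ne_zero 2 (hf'ne x hx)))
    rw [intervalIntegral.integral_eq_sub_of_hasDerivAt hD hint]
    ring
  have hEbound : ‖∫ ξ in a..b, E ξ‖ ≤ 2 / (lam * δ) := by
    have hstep : ∫ ξ in a..b, ‖E ξ‖ = ((f' a)⁻¹ - (f' b)⁻¹) / lam := by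
      have : ∫ ξ in a..b, ‖E ξ‖ = ∫ ξ in a..b, (f'' ξ / (f' ξ)^2) / lam := by
        apply intervalIntegral.integral_congr
        intro x hx
        rw [huIcc] at hx
        exact hnormE x hx
      rw [this, intervalIntegral.integral_div, hH]
    have hinva : (f' a)⁻¹ ≤ 1/δ := by
      have : |(f' a)⁻¹| ≤ 1/δ := by
        rw [abs_inv, one_div]
        exact inv_anti₀ hδ (hδf a hamem)
      linarith [le_abs_self ((f' a)⁻¹)]
    have hinvb : -(f' b)⁻¹ ≤ 1/δ := by
      have : |(f' b)⁻¹| ≤ 1/δ := by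
        rw [abs_inv, one_div]
        exact inv_anti₀ hδ (hδf b hbmem)
      linarith [neg_abs_le ((f' b)⁻¹)]
    calc ‖∫ ξ in a..b, E ξ‖ ≤ ∫ ξ in a..b, ‖E ξ‖ :=
          intervalIntegral.norm_integral_le_integral_norm hab
      _ = ((f' a)⁻¹ - (f' b)⁻¹) / lam := hstep
      _ ≤ (2/δ) / lam := by
          have hsum : 1/δ + 1/δ = 2/δ := by ring
          have h2 : (f' a)⁻¹ - (f' b)⁻¹ ≤ 2/δ := by linarith
          exact (div_le_div_iff_of_pos_right hlam).mpr h2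
      _ = 2 / (lam * δ) := by field_simp
  calc ‖∫ ξ in a..b, Complex.exp (Complex.I * lam * f ξ)‖
      = ‖(G b - G a) + ∫ ξ in a..b, E ξ‖ := by rw [key]
    _ ≤ ‖G b - G a‖ + ‖∫ ξ in a..b, E ξ‖ := norm_add_le _ _
    _ ≤ (‖G b‖ + ‖G a‖) + 2/(lam * δ) := add_le_add (norm_sub_le _ _) hEbound
    _ ≤ (1/(lam*δ) + 1/(lam*δ)) + 2/(lam*δ) := by
        have := hGb b hbmem; have := hGb a hamem; gcongr <;> linarith
    _ = 4 / (lam * δ) := by ring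


lemma conj_intervalIntegral (g : ℝ → ℂ) (a b : ℝ) :
    (starRingEnd ℂ) (∫ x in a..b, g x) = ∫ x in a..b, (starRingEnd ℂ) (g x) := by
  rw [intervalIntegral, intervalIntegral, map_sub, ← integral_conj, ← integral_conj]

lemma gap_lemma {a b : ℝ} {f' f'' : ℝ → ℝ}
    (hf' : ∀ x ∈ Set.Icc a b, HasDerivAt f' (f'' x) x)
    (hf''c : ContinuousOn f'' (Set.Icc a b))
    (hone : ∀ x ∈ Set.Icc a b, 1 ≤ f'' x)
    {x y : ℝ} (hx : x ∈ Set.Icc a b) (hy : y ∈ Set.Icc a b) (hxy : x ≤ y) :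
    y - x ≤ f' y - f' x := by
  have hsub : Set.Icc x y ⊆ Set.Icc a b := Set.Icc_subset_Icc hx.1 hy.2
  have huIcc : Set.uIcc x y = Set.Icc x y := Set.uIcc_of_le hxy
  have hint : IntervalIntegrable f'' volume x y :=
    ContinuousOn.intervalIntegrable (by rw [huIcc]; exact hf''c.mono hsub)
  have hD : ∀ t ∈ Set.uIcc x y, HasDerivAt f' (f'' t) t := by
    intro t ht; rw [huIcc] at ht; exact hf' t (hsub ht)
  have hFTC : ∫ t in x..y, f'' t = f' y - f' x :=
    intervalIntegral.integral_eq_sub_of_hasDerivAt hD hint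
  have hmono : ∫ t in x..y, (1:ℝ) ≤ ∫ t in x..y, f'' t := by
    apply intervalIntegral.integral_mono_on hxy (intervalIntegrable_const) hint
    intro t ht; exact hone t (hsub ht)
  rw [hFTC] at hmono
  simpa using hmono

lemma lemB {a b lam : ℝ} (hab : a ≤ b) (hlam : 0 < lam)
    {f f' f'' : ℝ → ℝ}
    (hf : ∀ x ∈ Set.Icc a b, HasDerivAt f (f' x) x)
    (hf' : ∀ x ∈ Set.Icc a b, HasDerivAt f' (f'' x) x)
    (hf''c : ContinuousOn f'' (Set.Icc a b))
    (hgt : ∀ x ∈ Set.Icc a b, 1 < f'' x) :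
    ‖∫ ξ in a..b, Complex.exp (Complex.I * lam * f ξ)‖ ≤ 10 * lam ^ (-(1/2) : ℝ) := by
  set δ : ℝ := lam ^ (-(1/2) : ℝ) with hδdef
  have hδ : 0 < δ := Real.rpow_pos_of_pos hlam _
  have huIcc : Set.uIcc a b = Set.Icc a b := Set.uIcc_of_le hab
  have hf'cont : ContinuousOn f' (Set.Icc a b) :=
    fun x hx => ((hf' x hx).continuousAt).continuousWithinAt
  have hfcont : ContinuousOn f (Set.Icc a b) :=
    fun x hx => ((hf x hx).continuousAt).continuousWithinAt
  have hmono : MonotoneOn f' (Set.Icc a b) := by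
    have : StrictMonoOn f' (Set.Icc a b) := by
      apply strictMonoOn_of_deriv_pos (convex_Icc a b) hf'cont
      intro x hx
      rw [interior_Icc] at hx
      rw [(hf' x (Set.mem_Icc_of_Ioo hx)).deriv]
      linarith [hgt x (Set.mem_Icc_of_Ioo hx)]
    exact this.monotoneOn
  have hamem : a ∈ Set.Icc a b := Set.left_mem_Icc.mpr hab
  have hbmem : b ∈ Set.Icc a b := Set.right_mem_Icc.mpr hab
  -- construct t1
  obtain ⟨t1, ht1m, hprop1, hlow1⟩ :
      ∃ t1, t1 ∈ Set.Icc a b ∧ (t1 = a ∨ ∀ ξ ∈ Set.Icc a t1, f' ξ ≤ -δ) ∧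
        (-δ ≤ f' t1 ∨ t1 = b) := by
    by_cases h1 : -δ ≤ f' a
    · exact ⟨a, hamem, Or.inl rfl, Or.inl h1⟩
    · by_cases h2 : f' b ≤ -δ
      · refine ⟨b, hbmem, Or.inr ?_, Or.inr rfl⟩
        intro ξ hξ
        exact le_trans (hmono hξ hbmem hξ.2) h2
      · obtain ⟨t1, ht1m, hft1⟩ := intermediate_value_Icc hab hf'cont
          (Set.mem_Icc.mpr ⟨le_of_not_ge h1, le_of_not_ge h2⟩)
        refine ⟨t1, ht1m, Or.inr ?_, Or.inl (le_of_eq hft1.symm)⟩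
        intro ξ hξ
        have hξm : ξ ∈ Set.Icc a b := ⟨hξ.1, le_trans hξ.2 ht1m.2⟩
        exact le_trans (hmono hξm ht1m hξ.2) (le_of_eq hft1)
  -- construct s2
  obtain ⟨s2, hs2m, hprop2, hlow2⟩ :
      ∃ s2, s2 ∈ Set.Icc a b ∧ (s2 = b ∨ ∀ ξ ∈ Set.Icc s2 b, δ ≤ f' ξ) ∧
        (f' s2 ≤ δ ∨ s2 = a) := by
    by_cases h1 : f' b ≤ δ
    · exact ⟨b, hbmem, Or.inl rfl, Or.inl h1⟩
    · by_cases h2 : δ ≤ f' a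
      · refine ⟨a, hamem, Or.inr ?_, Or.inr rfl⟩
        intro ξ hξ
        exact le_trans h2 (hmono hamem hξ hξ.1)
      · obtain ⟨s2, hs2m, hfs2⟩ := intermediate_value_Icc hab hf'cont
          (Set.mem_Icc.mpr ⟨le_of_not_ge h2, le_of_not_ge h1⟩)
        refine ⟨s2, hs2m, Or.inr ?_, Or.inl (le_of_eq hfs2)⟩
        intro ξ hξ
        have hξm : ξ ∈ Set.Icc a b := ⟨le_trans hs2m.1 hξ.1, hξ.2⟩
        exact le_trans (le_of_eq hfs2.symm) (hmono hs2m hξm hξ.1)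
  set t2 : ℝ := max t1 s2 with ht2def
  have ht1t2 : t1 ≤ t2 := le_max_left _ _
  have ht2m : t2 ∈ Set.Icc a b := ⟨le_trans ht1m.1 ht1t2, max_le ht1m.2 hs2m.2⟩
  have hprop2' : t2 = b ∨ ∀ ξ ∈ Set.Icc t2 b, δ ≤ f' ξ := by
    rcases hprop2 with h | h
    · left; rw [ht2def, h, max_eq_right ht1m.2]
    · right; intro ξ hξ
      exact h ξ ⟨le_trans (le_max_right t1 s2) hξ.1, hξ.2⟩
  have hgap : t2 - t1 ≤ 2 * δ := by
    rcases le_or_gt s2 t1 with h | h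
    · have : t2 = t1 := max_eq_left h
      rw [this]; simp; positivity
    · have ht2s2 : t2 = s2 := max_eq_right (le_of_lt h)
      have hft1 : -δ ≤ f' t1 := by
        rcases hlow1 with h' | h'
        · exact h'
        · exfalso; rw [h'] at h; exact absurd hs2m.2 (not_le.mpr h)
      have hfs2 : f' s2 ≤ δ := by
        rcases hlow2 with h' | h'
        · exact h'
        · exfalso; rw [h'] at h; exact absurd ht1m.1 (not_le.mpr h)
      have := gap_lemma hf' hf''c (fun x hx => le_of_lt (hgt x hx)) ht1m hs2m (le_of_lt h)
      rw [ht2s2]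
      linarith
  -- integrability on subintervals
  have hexpC : ContinuousOn (fun ξ => Complex.exp (Complex.I * lam * f ξ)) (Set.Icc a b) :=
    Complex.continuous_exp.comp_continuousOn
      ((continuous_const.continuousOn).mul (Complex.continuous_ofReal.comp_continuousOn hfcont))
  have hint : ∀ c d : ℝ, c ∈ Set.Icc a b → d ∈ Set.Icc a b → c ≤ d →
      IntervalIntegrable (fun ξ => Complex.exp (Complex.I * lam * f ξ)) volume c d := by
    intro c d hc hd hcd
    exact ContinuousOn.intervalIntegrable (by
      rw [Set.uIcc_of_le hcd]
      exact hexpC.mono (Set.Icc_subset_Icc hc.1 hd.2))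
  have h12 : (∫ ξ in a..t1, Complex.exp (Complex.I * lam * f ξ))
      + (∫ ξ in t1..t2, Complex.exp (Complex.I * lam * f ξ))
      = ∫ ξ in a..t2, Complex.exp (Complex.I * lam * f ξ) :=
    intervalIntegral.integral_add_adjacent_intervals
      (hint a t1 hamem ht1m ht1m.1) (hint t1 t2 ht1m ht2m ht1t2)
  have h123 : (∫ ξ in a..t2, Complex.exp (Complex.I * lam * f ξ))
      + (∫ ξ in t2..b, Complex.exp (Complex.I * lam * f ξ))
      = ∫ ξ in a..b, Complex.exp (Complex.I * lam * f ξ) :=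
    intervalIntegral.integral_add_adjacent_intervals
      (hint a t2 hamem ht2m ht2m.1) (hint t2 b ht2m hbmem ht2m.2)
  have bnd1 : ‖∫ ξ in a..t1, Complex.exp (Complex.I * lam * f ξ)‖ ≤ 4/(lam*δ) := by
    rcases hprop1 with h | h
    · rw [h, intervalIntegral.integral_same, norm_zero]; positivity
    · have hsub : Set.Icc a t1 ⊆ Set.Icc a b := Set.Icc_subset_Icc_right ht1m.2
      exact lemA ht1m.1 hlam hδ (fun x hx => hf x (hsub hx)) (fun x hx => hf' x (hsub hx))
        (hf''c.mono hsub) (fun x hx => by linarith [hgt x (hsub hx)])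
        (fun x hx => le_abs.mpr (Or.inr (by linarith [h x hx])))
  have bnd3 : ‖∫ ξ in t2..b, Complex.exp (Complex.I * lam * f ξ)‖ ≤ 4/(lam*δ) := by
    rcases hprop2' with h | h
    · rw [h, intervalIntegral.integral_same, norm_zero]; positivity
    · have hsub : Set.Icc t2 b ⊆ Set.Icc a b := Set.Icc_subset_Icc_left ht2m.1
      exact lemA ht2m.2 hlam hδ (fun x hx => hf x (hsub hx)) (fun x hx => hf' x (hsub hx))
        (hf''c.mono hsub) (fun x hx => by linarith [hgt x (hsub hx)])
        (fun x hx => le_abs.mpr (Or.inl (h x hx)))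
  have bnd2 : ‖∫ ξ in t1..t2, Complex.exp (Complex.I * lam * f ξ)‖ ≤ 2*δ := by
    have h1 := intervalIntegral.norm_integral_le_of_norm_le_const (C := 1)
      (f := fun ξ => Complex.exp (Complex.I * lam * f ξ)) (a := t1) (b := t2)
      (fun x _ => le_of_eq (norm_exp_phase lam (f x)))
    rw [one_mul, _root_.abs_of_nonneg (by linarith : (0:ℝ) ≤ t2 - t1)] at h1
    linarith
  have hld : 4/(lam*δ) = 4*δ := by
    have h1 : lam * δ = lam ^ ((1:ℝ)/2) := by
      have h2 := Real.rpow_add hlam (1:ℝ) (-(1/2))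
      rw [Real.rpow_one] at h2
      norm_num at h2 ⊢
      rw [hδdef]
      norm_num
      linarith [h2]
    rw [h1, hδdef, Real.rpow_neg hlam.le, div_eq_mul_inv]
  have htotal : ‖∫ ξ in a..b, Complex.exp (Complex.I * lam * f ξ)‖
      ≤ 4/(lam*δ) + 2*δ + 4/(lam*δ) := by
    calc ‖∫ ξ in a..b, Complex.exp (Complex.I * lam * f ξ)‖
        = ‖((∫ ξ in a..t1, Complex.exp (Complex.I * lam * f ξ))
            + (∫ ξ in t1..t2, Complex.exp (Complex.I * lam * f ξ)))
            + (∫ ξ in t2..b, Complex.exp (Complex.I * lam * f ξ))‖ := by rw [h12, h123]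
      _ ≤ ‖(∫ ξ in a..t1, Complex.exp (Complex.I * lam * f ξ))
            + (∫ ξ in t1..t2, Complex.exp (Complex.I * lam * f ξ))‖
            + ‖∫ ξ in t2..b, Complex.exp (Complex.I * lam * f ξ)‖ := norm_add_le _ _
      _ ≤ (‖∫ ξ in a..t1, Complex.exp (Complex.I * lam * f ξ)‖
            + ‖∫ ξ in t1..t2, Complex.exp (Complex.I * lam * f ξ)‖)
            + ‖∫ ξ in t2..b, Complex.exp (Complex.I * lam * f ξ)‖ := by
          gcongr; exact norm_add_le _ _
      _ ≤ 4/(lam*δ) + 2*δ + 4/(lam*δ) := by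
          apply add_le_add (add_le_add bnd1 bnd2) bnd3
  rw [hld] at htotal
  linarith

lemma lemB' {a b lam : ℝ} (hab : a ≤ b) (hlam : 0 < lam)
    {f f' f'' : ℝ → ℝ}
    (hf : ∀ x ∈ Set.Icc a b, HasDerivAt f (f' x) x)
    (hf' : ∀ x ∈ Set.Icc a b, HasDerivAt f' (f'' x) x)
    (hf''c : ContinuousOn f'' (Set.Icc a b))
    (habs : ∀ x ∈ Set.Icc a b, 1 < |f'' x|) :
    ‖∫ ξ in a..b, Complex.exp (Complex.I * lam * f ξ)‖ ≤ 10 * lam ^ (-(1/2) : ℝ) := by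
  have hamem : a ∈ Set.Icc a b := Set.left_mem_Icc.mpr hab
  have hne : ∀ x ∈ Set.Icc a b, f'' x ≠ 0 := by
    intro x hx h
    have := habs x hx
    rw [h, abs_zero] at this
    linarith
  have hdich : (∀ x ∈ Set.Icc a b, 1 < f'' x) ∨ (∀ x ∈ Set.Icc a b, f'' x < -1) := by
    have hconst : ∀ x ∈ Set.Icc a b, (0 < f'' a ↔ 0 < f'' x) := by
      intro x hx
      constructor <;> intro hpos <;> by_contra hneg
      · push_neg at hneg
        have h0 : (0:ℝ) ∈ Set.uIcc (f'' a) (f'' x) := Set.mem_uIcc.mpr (Or.inr ⟨hneg, hpos.le⟩)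
        obtain ⟨c, hcm, hc⟩ := intermediate_value_uIcc
          (hf''c.mono (Set.uIcc_subset_Icc hamem hx)) h0
        exact hne c (Set.uIcc_subset_Icc hamem hx hcm) hc
      · push_neg at hneg
        have h0 : (0:ℝ) ∈ Set.uIcc (f'' a) (f'' x) := Set.mem_uIcc.mpr (Or.inl ⟨hneg, hpos.le⟩)
        obtain ⟨c, hcm, hc⟩ := intermediate_value_uIcc
          (hf''c.mono (Set.uIcc_subset_Icc hamem hx)) h0
        exact hne c (Set.uIcc_subset_Icc hamem hx hcm) hc
    by_cases hpa : 0 < f'' a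
    · left
      intro x hx
      have hx' := (hconst x hx).mp hpa
      have := habs x hx
      rw [abs_of_pos hx'] at this
      exact this
    · right
      intro x hx
      have hx' : ¬ 0 < f'' x := fun h => hpa ((hconst x hx).mpr h)
      push_neg at hx'
      have := habs x hx
      rw [abs_of_nonpos hx'] at this
      linarith
  rcases hdich with h | h
  · exact lemB hab hlam hf hf' hf''c h
  · have hconj : ∀ ξ : ℝ, Complex.exp (Complex.I * lam * f ξ)
        = (starRingEnd ℂ) (Complex.exp (Complex.I * lam * (-(f ξ) : ℝ))) := by
      intro ξ
      rw [← Complex.exp_conj]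
      congr 1
      rw [map_mul, map_mul, Complex.conj_I, Complex.conj_ofReal, Complex.conj_ofReal]
      push_cast
      ring
    calc ‖∫ ξ in a..b, Complex.exp (Complex.I * lam * f ξ)‖
        = ‖∫ ξ in a..b, (starRingEnd ℂ) (Complex.exp (Complex.I * lam * (-(f ξ) : ℝ)))‖ := by
          congr 1
          exact intervalIntegral.integral_congr (fun x _ => hconj x)
      _ = ‖(starRingEnd ℂ) (∫ ξ in a..b, Complex.exp (Complex.I * lam * (-(f ξ) : ℝ)))‖ := by
          rw [conj_intervalIntegral]
      _ = ‖∫ ξ in a..b, Complex.exp (Complex.I * lam * (-(f ξ) : ℝ))‖ := RCLike.norm_conj _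
      _ ≤ 10 * lam ^ (-(1/2) : ℝ) := by
          exact lemB (f := fun ξ => -(f ξ)) (f' := fun ξ => -(f' ξ)) (f'' := fun ξ => -(f'' ξ))
            hab hlam (fun x hx => (hf x hx).neg) (fun x hx => (hf' x hx).neg)
            (hf''c.neg) (fun x hx => by show (1:ℝ) < -f'' x; linarith [h x hx])

lemma lemC {a b lam : ℝ} (hab : a ≤ b) (hlam : 0 < lam)
    {f f' f'' : ℝ → ℝ}
    (hf : ∀ x ∈ Set.Icc a b, HasDerivAt f (f' x) x)
    (hf' : ∀ x ∈ Set.Icc a b, HasDerivAt f' (f'' x) x)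
    (hf''c : ContinuousOn f'' (Set.Icc a b))
    (habs : ∀ x ∈ Set.Icc a b, 1 < |f'' x|)
    {ψ ψ' : ℝ → ℂ}
    (hψ : ∀ x ∈ Set.Icc a b, HasDerivAt ψ (ψ' x) x)
    (hψ'c : ContinuousOn ψ' (Set.Icc a b)) :
    ‖∫ ξ in a..b, Complex.exp (Complex.I * lam * f ξ) * ψ ξ‖
      ≤ 10 * lam ^ (-(1/2) : ℝ) * (‖ψ b‖ + ∫ ξ in a..b, ‖ψ' ξ‖) := by
  have huIcc : Set.uIcc a b = Set.Icc a b := Set.uIcc_of_le hab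
  have hamem : a ∈ Set.Icc a b := Set.left_mem_Icc.mpr hab
  have hbmem : b ∈ Set.Icc a b := Set.right_mem_Icc.mpr hab
  have hfcont : ContinuousOn f (Set.Icc a b) :=
    fun x hx => ((hf x hx).continuousAt).continuousWithinAt
  set M : ℝ := 10 * lam ^ (-(1/2) : ℝ) with hMdef
  have hM : 0 < M := by
    rw [hMdef]; positivity
  -- the clamped phase
  set clamp : ℝ → ℝ := fun ξ => max a (min b ξ) with hclampdef
  have hclampc : Continuous clamp := continuous_const.max (continuous_const.min continuous_id)
  have hclampmem : ∀ ξ, clamp ξ ∈ Set.Icc a b := by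
    intro ξ
    exact ⟨le_max_left _ _, max_le hab (min_le_left _ _)⟩
  set g : ℝ → ℂ := fun ξ => Complex.exp (Complex.I * lam * f (clamp ξ)) with hgdef
  have hgcont : Continuous g := by
    apply Complex.continuous_exp.comp
    exact continuous_const.mul
      (Complex.continuous_ofReal.comp (hfcont.comp_continuous hclampc hclampmem))
  have hgeq : ∀ x ∈ Set.Icc a b, g x = Complex.exp (Complex.I * lam * f x) := by
    intro x hx
    simp only [hgdef, hclampdef]
    rw [min_eq_right hx.2, max_eq_right hx.1]
  set F : ℝ → ℂ := fun x => ∫ ξ in a..x, g ξ with hFdef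
  have hF : ∀ x : ℝ, HasDerivAt F (g x) x :=
    fun x => (hgcont.integral_hasStrictDerivAt a x).hasDerivAt
  have hFb : ∀ x ∈ Set.Icc a b, ‖F x‖ ≤ M := by
    intro x hx
    have hsub : Set.Icc a x ⊆ Set.Icc a b := Set.Icc_subset_Icc_right hx.2
    have heq : F x = ∫ ξ in a..x, Complex.exp (Complex.I * lam * f ξ) := by
      apply intervalIntegral.integral_congr
      intro t ht
      rw [Set.uIcc_of_le hx.1] at ht
      exact hgeq t (hsub ht)
    rw [heq, hMdef]
    exact lemB' hx.1 hlam (fun t ht => hf t (hsub ht)) (fun t ht => hf' t (hsub ht))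
      (hf''c.mono hsub) (fun t ht => habs t (hsub ht))
  -- integration by parts
  have hψ'int : IntervalIntegrable ψ' volume a b :=
    ContinuousOn.intervalIntegrable (by rw [huIcc]; exact hψ'c)
  have hgint : IntervalIntegrable g volume a b := hgcont.intervalIntegrable a b
  have hibp := intervalIntegral.integral_mul_deriv_eq_deriv_mul
    (u := ψ) (u' := ψ') (v := F) (v' := g)
    (fun x hx => hψ x (huIcc ▸ hx)) (fun x _ => hF x) hψ'int hgint
  have hFa : F a = 0 := intervalIntegral.integral_same
  have hmain : ∫ ξ in a..b, Complex.exp (Complex.I * lam * f ξ) * ψ ξ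
      = ψ b * F b - ∫ x in a..b, ψ' x * F x := by
    have h1 : ∫ ξ in a..b, Complex.exp (Complex.I * lam * f ξ) * ψ ξ
        = ∫ x in a..b, ψ x * g x := by
      apply intervalIntegral.integral_congr
      intro x hx
      rw [huIcc] at hx
      show Complex.exp (Complex.I * lam * f x) * ψ x = ψ x * g x
      rw [hgeq x hx, mul_comm]
    rw [h1, hibp, hFa, mul_zero, sub_zero]
  rw [hmain]
  have hFcont : Continuous F := by
    have hd : Differentiable ℝ F := fun x => (hF x).differentiableAt
    exact hd.continuous
  calc ‖ψ b * F b - ∫ x in a..b, ψ' x * F x‖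
      ≤ ‖ψ b * F b‖ + ‖∫ x in a..b, ψ' x * F x‖ := norm_sub_le _ _
    _ ≤ ‖ψ b‖ * M + ∫ x in a..b, ‖ψ' x‖ * M := by
        apply add_le_add
        · rw [norm_mul]
          exact mul_le_mul_of_nonneg_left (hFb b hbmem) (norm_nonneg _)
        · calc ‖∫ x in a..b, ψ' x * F x‖ ≤ ∫ x in a..b, ‖ψ' x * F x‖ :=
              intervalIntegral.norm_integral_le_integral_norm hab
            _ ≤ ∫ x in a..b, ‖ψ' x‖ * M := by
                apply intervalIntegral.integral_mono_on hab
                · exact ContinuousOn.intervalIntegrable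
                    (by rw [huIcc]; exact (hψ'c.mul hFcont.continuousOn).norm)
                · exact ContinuousOn.intervalIntegrable
                    (by rw [huIcc]; exact hψ'c.norm.mul continuousOn_const)
                · intro x hx
                  rw [norm_mul]
                  exact mul_le_mul_of_nonneg_left (hFb x hx) (norm_nonneg _)
    _ = M * (‖ψ b‖ + ∫ x in a..b, ‖ψ' x‖) := by
        rw [intervalIntegral.integral_mul_const]
        ring

end VdC

theorem stmt3 :
    ∃ C > (0:ℝ),
      ∀ (a b : ℝ), a < b →
      ∀ (f f' f'' : ℝ → ℝ),
        (∀ x ∈ Set.Icc a b, HasDerivAt f (f' x) x) →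
        (∀ x ∈ Set.Icc a b, HasDerivAt f' (f'' x) x) →
        ContinuousOn f'' (Set.Icc a b) →
        (∀ ξ ∈ Set.Icc a b, 1 < |f'' ξ|) →
      ∀ (ψ ψ' : ℝ → ℂ),
        (∀ x ∈ Set.Icc a b, HasDerivAt ψ (ψ' x) x) →
        ContinuousOn ψ' (Set.Icc a b) →
      ∀ (lam : ℝ), lam ≠ 0 →
        ‖∫ ξ in a..b, Complex.exp (Complex.I * lam * f ξ) * ψ ξ‖
          ≤ C * |lam| ^ (-(1/2) : ℝ) * (‖ψ b‖ + ∫ ξ in a..b, ‖ψ' ξ‖) := by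
  refine ⟨10, by norm_num, ?_⟩
  intro a b hab f f' f'' hf hf' hf''c habs ψ ψ' hψ hψ'c lam hlam
  rcases lt_or_gt_of_ne hlam with hneg | hpos
  · have h2 : |lam| = -lam := abs_of_neg hneg
    rw [h2]
    have hstep : ‖∫ ξ in a..b, Complex.exp (Complex.I * lam * f ξ) * ψ ξ‖
        = ‖∫ ξ in a..b, Complex.exp (Complex.I * (-lam : ℝ) * ((-(f ξ) : ℝ) : ℂ)) * ψ ξ‖ := by
      congr 1
      apply intervalIntegral.integral_congr
      intro x _
      have h1 : Complex.I * lam * (f x : ℂ) = Complex.I * ((-lam : ℝ) : ℂ) * ((-(f x) : ℝ) : ℂ) := by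
        push_cast; ring
      show Complex.exp (Complex.I * lam * f x) * ψ x
          = Complex.exp (Complex.I * ((-lam : ℝ) : ℂ) * ((-(f x) : ℝ) : ℂ)) * ψ x
      rw [h1]
    rw [hstep]
    exact VdC.lemC (f := fun ξ => -(f ξ)) (f' := fun ξ => -(f' ξ)) (f'' := fun ξ => -(f'' ξ))
      hab.le (neg_pos.mpr hneg)
      (fun x hx => (hf x hx).neg) (fun x hx => (hf' x hx).neg) (hf''c.neg)
      (fun x hx => by show (1:ℝ) < |-(f'' x)|; rw [abs_neg]; exact habs x hx)
      hψ hψ'c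
  · rw [abs_of_pos hpos]
    exact VdC.lemC hab.le hpos hf hf' hf''c habs hψ hψ'c
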